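/- Let c₁, c₂, c₃ > 0 and λ < 0. Set α = (c₁ + c₂ + c₃)/λ. Then the vector function Φ = (Φ₁, Φ₂, Φ₃) with Φ₁(x) = -e^{-(α/c₁)x} for x < 0 and Φⱼ(x) = e^{(α/cⱼ)x} for x > 0 (j = 2,3) belongs to L² on each edge, satisfies -cⱼ²Φⱼ'' = -(1/λ²)(c₁+c₂+c₃)²·Φⱼ on each edge, and satisfies the δ'-vertex conditions c₁Φ₁'(0-) = c₂Φ₂'(0+) = c₃Φ₃'(0+) and c₂Φ₂(0+) + c₃Φ₃(0+) - c₁Φ₁(0-) = λ·c₁Φ₁'(0-). -/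

import Mathlib

open Real Set MeasureTheory

private lemma deriv_exp_mul (k : ℝ) (x : ℝ) :
    deriv (fun x : ℝ => Real.exp (k * x)) x = k * Real.exp (k * x) := by
  have h : HasDerivAt (fun x : ℝ => Real.exp (k * x)) (Real.exp (k * x) * k) x := by
    simpa using ((hasDerivAt_id x).const_mul k).exp
  rw [h.deriv]; ring

private lemma integrableOn_exp_Ioi {b : ℝ} (hb : b < 0) :
    IntegrableOn (fun x : ℝ => Real.exp (b * x)) (Ioi 0) := by
  have := exp_neg_integrableOn_Ioi 0 (b := -b) (by linarith)
  simpa using this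

private lemma integrableOn_exp_Iio {b : ℝ} (hb : 0 < b) :
    IntegrableOn (fun x : ℝ => Real.exp (b * x)) (Iio 0) := by
  have h : IntegrableOn (fun x : ℝ => Real.exp (-b * x)) (Ioi 0) :=
    integrableOn_exp_Ioi (by linarith)
  have := (MeasurePreserving.integrableOn_comp_preimage (Measure.measurePreserving_neg
      (volume : Measure ℝ)) (Homeomorph.neg ℝ).measurableEmbedding).2 h
  have heq : ((Homeomorph.neg ℝ) ⁻¹' Ioi 0) = Iio 0 := by
    ext x; simp [Homeomorph.neg]
  simpa [heq, Function.comp_def, mul_neg, neg_neg, neg_mul] using this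

theorem stmt_12 (c₁ c₂ c₃ lam : ℝ) (hc₁ : 0 < c₁) (hc₂ : 0 < c₂) (hc₃ : 0 < c₃)
    (hlam : lam < 0) :
    let α := (c₁ + c₂ + c₃) / lam
    let Φ₁ : ℝ → ℝ := fun x => -exp (-(α / c₁) * x)
    let Φ₂ : ℝ → ℝ := fun x => exp ((α / c₂) * x)
    let Φ₃ : ℝ → ℝ := fun x => exp ((α / c₃) * x)
    IntegrableOn (fun x => (Φ₁ x) ^ 2) (Iio 0) ∧
    IntegrableOn (fun x => (Φ₂ x) ^ 2) (Ioi 0) ∧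
    IntegrableOn (fun x => (Φ₃ x) ^ 2) (Ioi 0) ∧
    (∀ x < (0 : ℝ), -c₁ ^ 2 * deriv (deriv Φ₁) x
        = -(1 / lam ^ 2) * (c₁ + c₂ + c₃) ^ 2 * Φ₁ x) ∧
    (∀ x > (0 : ℝ), -c₂ ^ 2 * deriv (deriv Φ₂) x
        = -(1 / lam ^ 2) * (c₁ + c₂ + c₃) ^ 2 * Φ₂ x) ∧
    (∀ x > (0 : ℝ), -c₃ ^ 2 * deriv (deriv Φ₃) x
        = -(1 / lam ^ 2) * (c₁ + c₂ + c₃) ^ 2 * Φ₃ x) ∧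
    c₁ * deriv Φ₁ 0 = c₂ * deriv Φ₂ 0 ∧
    c₂ * deriv Φ₂ 0 = c₃ * deriv Φ₃ 0 ∧
    c₂ * Φ₂ 0 + c₃ * Φ₃ 0 - c₁ * Φ₁ 0 = lam * (c₁ * deriv Φ₁ 0) := by
  intro α Φ₁ Φ₂ Φ₃
  have hsum : 0 < c₁ + c₂ + c₃ := by linarith
  have hα : α < 0 := div_neg_of_pos_of_neg hsum hlam
  have hlam' : lam ≠ 0 := ne_of_lt hlam
  have hαl : α * lam = c₁ + c₂ + c₃ := div_mul_cancel₀ _ hlam'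
  -- second derivative identity for exponentials
  have dd : ∀ k : ℝ, ∀ x : ℝ, deriv (deriv (fun x : ℝ => Real.exp (k * x))) x
      = k ^ 2 * Real.exp (k * x) := by
    intro k x
    have h1 : deriv (fun x : ℝ => Real.exp (k * x)) = fun x => k * Real.exp (k * x) :=
      funext fun x => deriv_exp_mul k x
    rw [h1, deriv_const_mul _ (by
      exact (((hasDerivAt_id x).const_mul k).exp).differentiableAt), deriv_exp_mul]
    ring
  have hΦ₁ : Φ₁ = fun x => -Real.exp (-(α / c₁) * x) := rfl
  have hΦ₁d : deriv Φ₁ = fun x => (α / c₁) * Real.exp (-(α / c₁) * x) := by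
    funext x
    rw [hΦ₁, deriv.fun_neg, deriv_exp_mul]
    ring
  refine ⟨?_, ?_, ?_, ?_, ?_, ?_, ?_, ?_, ?_⟩
  · have hb : (0:ℝ) < -(2 * α / c₁) := by
      have : 2 * α / c₁ < 0 := div_neg_of_neg_of_pos (by linarith) hc₁
      linarith
    exact (integrableOn_exp_Iio hb).congr_fun
        (fun x _ => by
          simp only [Φ₁]
          rw [neg_pow, ← Real.exp_nat_mul]
          ring_nf) measurableSet_Iio
  · exact (integrableOn_exp_Ioi (b := 2 * α / c₂) (by
      have := div_neg_of_neg_of_pos (by linarith : 2 * α < 0) hc₂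
      linarith [this])).congr_fun
      (fun x _ => by
        simp only [Φ₂]
        rw [← Real.exp_nat_mul]
        ring_nf) measurableSet_Ioi
  · exact (integrableOn_exp_Ioi (b := 2 * α / c₃) (by
      have := div_neg_of_neg_of_pos (by linarith : 2 * α < 0) hc₃
      linarith [this])).congr_fun
      (fun x _ => by
        simp only [Φ₃]
        rw [← Real.exp_nat_mul]
        ring_nf) measurableSet_Ioi
  · intro x _
    have : deriv (deriv Φ₁) x = -((-(α / c₁)) ^ 2 * Real.exp (-(α / c₁) * x)) := by
      have : deriv Φ₁ = fun x => -(deriv (fun x : ℝ => Real.exp (-(α / c₁) * x)) x) := by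
        funext y; rw [hΦ₁, deriv.fun_neg]
      rw [this]
      simp only [deriv.fun_neg]
      rw [dd]
    rw [this]
    simp only [Φ₁]
    field_simp [α]
    linear_combination (α * lam + (c₁ + c₂ + c₃)) * hαl
  · intro x _
    rw [dd]
    simp only [Φ₂]
    field_simp [α]
    linear_combination (-(α * lam + (c₁ + c₂ + c₃))) * hαl
  · intro x _
    rw [dd]
    simp only [Φ₃]
    field_simp [α]
    linear_combination (-(α * lam + (c₁ + c₂ + c₃))) * hαl
  · rw [hΦ₁d]
    have h2 : deriv Φ₂ 0 = (α / c₂) * Real.exp ((α / c₂) * 0) := deriv_exp_mul _ 0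
    rw [h2]
    simp
    field_simp
  · have h2 : deriv Φ₂ 0 = (α / c₂) * Real.exp ((α / c₂) * 0) := deriv_exp_mul _ 0
    have h3 : deriv Φ₃ 0 = (α / c₃) * Real.exp ((α / c₃) * 0) := deriv_exp_mul _ 0
    rw [h2, h3]
    simp
    field_simp
  · rw [hΦ₁d]
    simp only [Φ₁, Φ₂, Φ₃, mul_zero, neg_zero, Real.exp_zero, mul_one]
    field_simp [α]
    linear_combination (-1 : ℝ) * hαl
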